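/- Let p be an odd prime, K a field of characteristic ≠ p containing ζ_p, K(a^{1/p})/K cyclic of degree p with Galois group generated by σ_a, and β ∈ K(a^{1/p})^× with N_{K(a^{1/p})/K}(β) = b ∈ K^×. For 1 ≤ n < p define A_n = ∏_{i=0}^{p-1} σ_a^i(β^{C(i,n)}), where C(i,n) is the binomial coefficient. Then for each 2 ≤ n < p: σ_a(A_n)/A_n · σ_a(A_{n-1}) = β^{C(p,n)}. -/

import Mathlib

/-- With `L = K(a^{1/p})` cyclic of degree `p` over `K`, Galois generator `σ`,
`β ∈ L` of norm `b ∈ K`, and `A_n = ∏_{i<p} σ^i(β^{C(i,n)})`: for `2 ≤ n < p`,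
`σ(A_n)/A_n · σ(A_{n-1}) = β^{C(p,n)}`, i.e. `σ(A_n)·σ(A_{n-1}) = A_n·β^{C(p,n)}`. -/
theorem stmt17 (p : ℕ) (hp : p.Prime) (hodd : Odd p)
    (K L : Type*) [Field K] [Field L] [Algebra K L]
    (hchar : ringChar K ≠ p)
    (ζ : K) (hζ : IsPrimitiveRoot ζ p)
    (a b : K) (α : L) (hα : α ^ p = algebraMap K L a)
    (hdeg : Module.finrank K L = p)
    (σ : L ≃ₐ[K] L) (hσ : orderOf σ = p) (hσα : σ α = algebraMap K L ζ * α)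
    (β : L) (hβ0 : β ≠ 0)
    (hNβ : ∏ i ∈ Finset.range p, (σ ^ i) β = algebraMap K L b) :
    ∀ n : ℕ, 2 ≤ n → n < p →
      σ (∏ i ∈ Finset.range p, (σ ^ i) (β ^ (i.choose n))) *
          σ (∏ i ∈ Finset.range p, (σ ^ i) (β ^ (i.choose (n - 1)))) =
        (∏ i ∈ Finset.range p, (σ ^ i) (β ^ (i.choose n))) * β ^ (p.choose n) := by
  intro n hn2 hnp
  have hσp : σ ^ p = 1 := by rw [← hσ]; exact pow_orderOf_eq_one σ
  set g : ℕ → L := fun j => (σ ^ j) (β ^ j.choose n) with hg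
  have lhs_eq : σ (∏ i ∈ Finset.range p, (σ ^ i) (β ^ i.choose n)) *
      σ (∏ i ∈ Finset.range p, (σ ^ i) (β ^ i.choose (n - 1))) =
      ∏ i ∈ Finset.range p, g (i + 1) := by
    rw [map_prod, map_prod, ← Finset.prod_mul_distrib]
    refine Finset.prod_congr rfl fun i _ => ?_
    have hpascal : (i + 1).choose n = i.choose n + i.choose (n - 1) := by
      have hn1 : n - 1 + 1 = n := Nat.succ_pred_eq_of_pos (Nat.lt_of_lt_of_le Nat.zero_lt_two hn2)
      rw [← hn1, Nat.choose_succ_succ', Nat.add_sub_cancel]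
      omega
    have hps : (σ ^ (i + 1)) = σ * σ ^ i := by rw [pow_succ']
    simp only [hg, hpascal, hps, AlgEquiv.mul_apply, pow_add, map_mul]
  rw [lhs_eq]
  have shift : ∏ i ∈ Finset.range (p + 1), g i =
      (∏ i ∈ Finset.range p, g (i + 1)) * g 0 := Finset.prod_range_succ' g p
  have hg0 : g 0 = 1 := by
    simp [hg, Nat.choose_eq_zero_of_lt (show 0 < n by omega)]
  have hgp : g p = β ^ p.choose n := by
    show (σ ^ p) (β ^ p.choose n) = β ^ p.choose n
    rw [hσp, AlgEquiv.one_apply]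
  have step : ∏ i ∈ Finset.range (p + 1), g i =
      (∏ i ∈ Finset.range p, g i) * β ^ p.choose n := by
    rw [Finset.prod_range_succ, hgp]
  rw [hg0, mul_one] at shift
  rw [← shift, step]
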